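/- In a lexicographically sorted array of equal-length binary strings, for any three ordered strings K2 ≤ K1 ≤ K, the extended distance satisfies dist_e(K2,K) ≥ dist_e(K1,K), where dist_e(A,B) = KL(A,B) + KD_e(A,B)/2^B with KL the non-prefix length and KD_e the absolute difference of the decimal values of the length-B substrings immediately following the common prefix. -/

import Mathlib

/-- value of a binary string read as a binary numeral (most significant bit first) -/
def decimal (K : List Bool) : ℕ :=
  K.foldl (fun acc b => 2 * acc + cond b 1 0) 0

/-- length of the longest common prefix of two strings -/
def lcpLen : List Bool → List Bool → ℕ
  | a :: as, b :: bs => if a = b then lcpLen as bs + 1 else 0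
  | _, _ => 0

/-- non-prefix length `KL` of two hashkeys -/
def KL (K1 K2 : List Bool) : ℕ := K1.length - lcpLen K1 K2

/-- extended element distance `KD_e` -/
def KDe (B : ℕ) (K1 K2 : List Bool) : ℕ :=
  Nat.dist (decimal ((K1.drop (lcpLen K1 K2)).take B))
           (decimal ((K2.drop (lcpLen K1 K2)).take B))

/-- extended hashkey distance `dist_e = KL + KD_e / 2^B` -/
noncomputable def distE (B : ℕ) (K1 K2 : List Bool) : ℝ :=
  (KL K1 K2 : ℝ) + (KDe B K1 K2 : ℝ) / 2 ^ B

/- ## auxiliary lemmas -/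

lemma lcpLen_nil_left (y : List Bool) : lcpLen [] y = 0 := by cases y <;> rfl

lemma lcpLen_nil_right (x : List Bool) : lcpLen x [] = 0 := by cases x <;> rfl

lemma lcpLen_cons (a b : Bool) (as bs : List Bool) :
    lcpLen (a :: as) (b :: bs) = if a = b then lcpLen as bs + 1 else 0 := rfl

lemma lcpLen_le_length : ∀ (x y : List Bool), lcpLen x y ≤ x.length
  | [], y => by simp [lcpLen_nil_left]
  | a :: as, [] => by simp [lcpLen_nil_right]
  | a :: as, b :: bs => by
    rw [lcpLen_cons]
    split
    · simpa using lcpLen_le_length as bs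
    · simp

lemma decimal_aux (K : List Bool) :
    ∀ a : ℕ, K.foldl (fun acc b => 2 * acc + cond b 1 0) a = a * 2 ^ K.length + decimal K := by
  induction K with
  | nil => intro a; simp [decimal]
  | cons b l ih =>
    intro a
    have h0 : decimal (b :: l) = (cond b 1 0) * 2 ^ l.length + decimal l := by
      show List.foldl _ _ (b :: l) = _
      rw [List.foldl_cons, ih]
      ring_nf
    show List.foldl _ _ (b :: l) = _
    rw [List.foldl_cons, ih, h0, List.length_cons, pow_succ]
    ring

lemma decimal_cons (b : Bool) (l : List Bool) :
    decimal (b :: l) = (cond b 1 0) * 2 ^ l.length + decimal l := by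
  show List.foldl _ _ (b :: l) = _
  rw [List.foldl_cons, decimal_aux]
  ring_nf

lemma decimal_lt (l : List Bool) : decimal l < 2 ^ l.length := by
  induction l with
  | nil => simp [decimal]
  | cons b l ih =>
    rw [List.length_cons, decimal_cons, pow_succ]
    cases b <;> simp <;> omega

lemma cons_le_cons_iff (a b : Bool) (x y : List Bool) :
    (a :: x : List Bool) ≤ b :: y ↔ a < b ∨ (a = b ∧ x ≤ y) := by
  constructor
  · intro h
    rcases lt_or_eq_of_le h with h | h
    · have h' : List.Lex (· < ·) (a :: x) (b :: y) := h
      cases h' with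
      | cons h'' => exact Or.inr ⟨rfl, le_of_lt h''⟩
      | rel h'' => exact Or.inl h''
    · injection h with h1 h2
      exact Or.inr ⟨h1, le_of_eq h2⟩
  · rintro (h | ⟨rfl, h⟩)
    · exact le_of_lt (List.Lex.rel h)
    · exact List.cons_le_cons a h

lemma not_cons_le_nil (a : Bool) (x : List Bool) : ¬ ((a :: x : List Bool) ≤ []) := by
  intro h
  have := le_antisymm h (le_of_lt List.Lex.nil)
  simp at this

lemma lcp_mono : ∀ (K K1 K2 : List Bool), K2 ≤ K1 → K1 ≤ K → lcpLen K2 K ≤ lcpLen K1 K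
  | [], K1, K2, _, _ => by simp [lcpLen_nil_right]
  | c :: cs, [], K2, h21, _ => by
    have : K2 = [] := by
      cases K2 with
      | nil => rfl
      | cons a as => exact absurd h21 (not_cons_le_nil a as)
    simp [this, lcpLen_nil_left]
  | c :: cs, b :: bs, [], _, _ => by simp [lcpLen_nil_left]
  | c :: cs, b :: bs, a :: as, h21, h1K => by
    rw [cons_le_cons_iff] at h21 h1K
    rw [lcpLen_cons, lcpLen_cons]
    rcases h1K with hbc | ⟨rfl, hbc⟩
    · -- b < c, so b = false, c = true; a ≤ b so a = false ≠ c
      have hb : b = false ∧ c = true := by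
        revert hbc; cases b <;> cases c <;> decide
      have ha : a = false := by
        rcases h21 with h | ⟨rfl, _⟩
        · rw [hb.1] at h
          cases a
          · rfl
          · exact absurd h (by decide)
        · exact hb.1
      simp [ha, hb.1, hb.2]
    · rcases h21 with hab | ⟨rfl, hab⟩
      · -- a < b, so a = false, b = true
        have : a ≠ b := by cases a <;> cases b <;> simp_all
        simp [this]
      · split
        · exact Nat.succ_le_succ (lcp_mono cs bs as hab hbc)
        · simp

lemma lcp_lower : ∀ (a b c : List Bool), min (lcpLen a c) (lcpLen b c) ≤ lcpLen a b
  | [], b, c => by simp [lcpLen_nil_left]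
  | x :: xs, [], c => by simp [lcpLen_nil_right, lcpLen_nil_left]
  | x :: xs, y :: ys, [] => by simp [lcpLen_nil_right]
  | x :: xs, y :: ys, z :: zs => by
    rw [lcpLen_cons, lcpLen_cons, lcpLen_cons]
    by_cases hxz : x = z
    · by_cases hyz : y = z
      · subst hxz; subst hyz
        simp only [if_pos rfl, eq_self_iff_true, if_true]
        have := lcp_lower xs ys zs
        omega
      · simp [hxz, hyz]
    · simp [hxz]

lemma le_take : ∀ (B : ℕ) (x y : List Bool), x ≤ y → x.take B ≤ y.take B
  | _, [], y, _ => by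
    simp
    generalize List.take _ y = t
    rcases t with _ | ⟨_, _⟩
    · exact le_refl _
    · exact le_of_lt List.Lex.nil
  | _, a :: as, [], h => absurd h (not_cons_le_nil a as)
  | 0, a :: as, b :: bs, _ => le_refl _
  | B + 1, a :: as, b :: bs, h => by
    rw [cons_le_cons_iff] at h
    rw [List.take_succ_cons, List.take_succ_cons, cons_le_cons_iff]
    rcases h with h | ⟨rfl, h⟩
    · exact Or.inl h
    · exact Or.inr ⟨rfl, le_take B as bs h⟩

lemma le_drop : ∀ (n : ℕ) (x y : List Bool), x ≤ y → n ≤ lcpLen x y → x.drop n ≤ y.drop n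
  | 0, x, y, h, _ => h
  | n + 1, [], y, _, hn => by rw [lcpLen_nil_left] at hn; omega
  | n + 1, a :: as, [], _, hn => by rw [lcpLen_nil_right] at hn; omega
  | n + 1, a :: as, b :: bs, h, hn => by
    rw [lcpLen_cons] at hn
    by_cases hab : a = b
    · subst hab
      rw [if_pos rfl] at hn
      rw [cons_le_cons_iff] at h
      rcases h with h | ⟨_, h⟩
      · exact absurd h (lt_irrefl a)
      · exact le_drop n as bs h (by omega)
    · rw [if_neg hab] at hn; omega

lemma decimal_le_of_le : ∀ (x y : List Bool), x ≤ y → x.length = y.length →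
    decimal x ≤ decimal y
  | [], y, _, hl => by
    have : y = [] := by cases y <;> simp_all
    simp [this]
  | a :: as, [], h, _ => absurd h (not_cons_le_nil a as)
  | a :: as, b :: bs, h, hl => by
    rw [cons_le_cons_iff] at h
    simp only [List.length_cons, Nat.succ_inj] at hl
    rw [decimal_cons, decimal_cons, hl]
    rcases h with h | ⟨rfl, h⟩
    · have ha : a = false ∧ b = true := by revert h; cases a <;> cases b <;> decide
      rw [ha.1, ha.2]
      have hd := decimal_lt as
      rw [hl] at hd
      simp only [Bool.cond_false, Bool.cond_true]
      omega
    · have := decimal_le_of_le as bs h hl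
      omega

lemma KDe_lt (B : ℕ) (K1 K2 : List Bool) : KDe B K1 K2 < 2 ^ B := by
  have h1 := decimal_lt ((K1.drop (lcpLen K1 K2)).take B)
  have h2 := decimal_lt ((K2.drop (lcpLen K1 K2)).take B)
  have l1 : ((K1.drop (lcpLen K1 K2)).take B).length ≤ B := by simp
  have l2 : ((K2.drop (lcpLen K1 K2)).take B).length ≤ B := by simp
  have p1 : (2:ℕ) ^ ((K1.drop (lcpLen K1 K2)).take B).length ≤ 2 ^ B :=
    Nat.pow_le_pow_right (by norm_num) l1
  have p2 : (2:ℕ) ^ ((K2.drop (lcpLen K1 K2)).take B).length ≤ 2 ^ B :=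
    Nat.pow_le_pow_right (by norm_num) l2
  rw [KDe, Nat.dist]
  omega

theorem stmt_7 (m B : ℕ) (hB : 1 ≤ B) (K2 K1 K : List Bool)
    (h2 : K2.length = m) (h1 : K1.length = m) (h : K.length = m)
    (h21 : K2 ≤ K1) (h1K : K1 ≤ K) :
    distE B K1 K ≤ distE B K2 K := by
  have h2K : K2 ≤ K := le_trans h21 h1K
  set l1 := lcpLen K1 K with hl1
  set l2 := lcpLen K2 K with hl2
  have hmono : l2 ≤ l1 := lcp_mono K K1 K2 h21 h1K
  have hl1m : l1 ≤ m := h1 ▸ lcpLen_le_length K1 K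
  have hl2m : l2 ≤ m := h2 ▸ lcpLen_le_length K2 K
  rcases eq_or_lt_of_le hmono with heq | hlt
  · -- equal lcp lengths
    have hKL : KL K1 K = KL K2 K := by
      rw [KL, KL, h1, h2, ← hl1, ← hl2, heq]
    -- decimal comparisons
    have hlcp21 : l2 ≤ lcpLen K2 K1 := by
      have := lcp_lower K2 K1 K
      rw [← hl2, ← hl1, ← heq] at this
      simpa using this
    have hd21 : (K2.drop l2) ≤ (K1.drop l2) := le_drop l2 K2 K1 h21 hlcp21
    have hd1K : (K1.drop l1) ≤ (K.drop l1) := le_drop l1 K1 K h1K (le_refl _)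
    have hd2K : (K2.drop l2) ≤ (K.drop l2) := le_drop l2 K2 K h2K (le_refl _)
    have hlen21 : ((K2.drop l2).take B).length = ((K1.drop l2).take B).length := by
      simp [h1, h2]
    have hlen1K : ((K1.drop l1).take B).length = ((K.drop l1).take B).length := by
      simp [h1, h]
    have hlen2K : ((K2.drop l2).take B).length = ((K.drop l2).take B).length := by
      simp [h2, h]
    have e21 : decimal ((K2.drop l2).take B) ≤ decimal ((K1.drop l2).take B) :=
      decimal_le_of_le _ _ (le_take B _ _ hd21) hlen21
    have e1K : decimal ((K1.drop l1).take B) ≤ decimal ((K.drop l1).take B) :=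
      decimal_le_of_le _ _ (le_take B _ _ hd1K) hlen1K
    have e2K : decimal ((K2.drop l2).take B) ≤ decimal ((K.drop l2).take B) :=
      decimal_le_of_le _ _ (le_take B _ _ hd2K) hlen2K
    have hKDe : KDe B K1 K ≤ KDe B K2 K := by
      rw [KDe, KDe, ← hl1, ← hl2, Nat.dist_eq_sub_of_le e1K, Nat.dist_eq_sub_of_le e2K,
        heq]
      rw [heq] at e21
      omega
    rw [distE, distE, hKL]
    have hpow : (0:ℝ) < 2 ^ B := by positivity
    gcongr
  · -- l2 < l1 : KL strictly bigger for K2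
    have hKL1 : KL K1 K = m - l1 := by rw [KL, h1]
    have hKL2 : KL K2 K = m - l2 := by rw [KL, h2]
    have hkd1 : (KDe B K1 K : ℝ) / 2 ^ B < 1 := by
      rw [div_lt_one (by positivity)]
      exact_mod_cast KDe_lt B K1 K
    have hkd2 : (0:ℝ) ≤ (KDe B K2 K : ℝ) / 2 ^ B := by positivity
    have hnat : (m - l1) + 1 ≤ m - l2 := by omega
    rw [distE, distE, hKL1, hKL2]
    have : ((m - l1 : ℕ) : ℝ) + 1 ≤ ((m - l2 : ℕ) : ℝ) := by exact_mod_cast hnat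
    linarith
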